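/- arXiv:1809.07833 — 2 statements merged into one kernel-verified Lean document; each statement's English description precedes it below -/
import Mathlib

section
/- Let G_1 and G_2 be disjoint finite bipartite graphs, v ∈ G_1, w ∈ G_2. If every even coefficient b_{2k} of φ(G_1 ∪ (G_2 - w); x) is at least the corresponding coefficient of φ(G_2 ∪ (G_1 - v); x), then E_{G_2}(w) ≤ E_{G_1}(v). -/
open Matrix BigOperators Finset Polynomial

noncomputable def adjMat {V : Type*} [Fintype V] (G : SimpleGraph V) : Matrix V V ℝ :=
  letI := Classical.decRel G.Adj; G.adjMatrix ℝ

noncomputable def absMat {V : Type*} [Fintype V] [DecidableEq V] (A : Matrix V V ℝ) :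
    Matrix V V ℝ :=
  (Matrix.posSemidef_self_mul_conjTranspose A).1.eigenvectorUnitary.1 *
    diagonal ((↑) ∘ (√·) ∘ (Matrix.posSemidef_self_mul_conjTranspose A).1.eigenvalues) *
    (star (Matrix.posSemidef_self_mul_conjTranspose A).1.eigenvectorUnitary : Matrix V V ℝ)

/-- The energy of a vertex: the (i,i) entry of |A| = (A Aᴴ)^{1/2}. -/
noncomputable def vertexEnergy {V : Type*} [Fintype V] [DecidableEq V]
    (G : SimpleGraph V) (i : V) : ℝ :=
  absMat (adjMat G) i i

lemma adjugate_diag_eq {R : Type*} [CommRing R] {p : ℕ}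
    (M : Matrix (Fin (p+1)) (Fin (p+1)) R) (u : Fin (p+1)) :
    M.adjugate u u = (M.submatrix u.succAbove u.succAbove).det := by
  rw [Matrix.adjugate_apply, Matrix.det_succ_row _ u]
  rw [Finset.sum_eq_single u]
  · have h1 : (M.updateRow u (Pi.single u 1)).submatrix u.succAbove u.succAbove
        = M.submatrix u.succAbove u.succAbove := by
      ext i j
      simp [Matrix.submatrix_apply, Matrix.updateRow_apply, Fin.succAbove_ne u i]
    rw [h1]
    simp [Matrix.updateRow_self, Pi.single_eq_same, pow_add, ← mul_pow]
  · intro j _ hj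
    simp [Matrix.updateRow_self, Pi.single_eq_of_ne hj]
  · simp

lemma eval_charpoly' {q : ℕ} (N : Matrix (Fin q) (Fin q) ℂ) (z : ℂ) :
    (N.charpoly).eval z = (z • (1 : Matrix (Fin q) (Fin q) ℂ) - N).det := by
  rw [Matrix.charpoly, ← Polynomial.coe_evalRingHom, RingHom.map_det]
  congr 1
  ext i j
  by_cases h : i = j
  · subst h; simp [Matrix.charmatrix_apply_eq, Matrix.one_apply]
  · simp [Matrix.charmatrix_apply_ne _ _ _ h, Matrix.one_apply, h]

open scoped MatrixOrder in
lemma spectral_data {p : ℕ} (A : Matrix (Fin (p+1)) (Fin (p+1)) ℝ) (hA : A.IsHermitian)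
    (u : Fin (p+1)) :
    ∃ (lam wt : Fin (p+1) → ℝ),
      (∀ j, 0 ≤ wt j) ∧ (∑ j, wt j = 1) ∧
      (absMat A u u = ∑ j, wt j * |lam j|) ∧
      (∀ z : ℂ, (A.charpoly.map (algebraMap ℝ ℂ)).eval z = ∏ k, (z - lam k)) ∧
      (∀ z : ℂ, ((A.submatrix u.succAbove u.succAbove).charpoly.map (algebraMap ℝ ℂ)).eval z
          = ∑ j, (wt j : ℂ) * ∏ k ∈ Finset.univ.erase j, (z - lam k)) := by
  classical
  set lam : Fin (p+1) → ℝ := hA.eigenvalues with hlam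
  set V : Matrix (Fin (p+1)) (Fin (p+1)) ℝ :=
    (hA.eigenvectorUnitary : Matrix (Fin (p+1)) (Fin (p+1)) ℝ) with hVdef
  have hV1 : V * Vᴴ = 1 := Matrix.mem_unitaryGroup_iff.mp hA.eigenvectorUnitary.2
  have hV2 : Vᴴ * V = 1 := mul_eq_one_comm.mp hV1
  have hspec : A = V * Matrix.diagonal lam * Vᴴ := by
    have := hA.spectral_theorem
    simpa [RCLike.ofReal_real_eq_id, Matrix.star_eq_conjTranspose] using this
  have conj_mul : ∀ (d e : Fin (p+1) → ℝ),
      (V * Matrix.diagonal d * Vᴴ) * (V * Matrix.diagonal e * Vᴴ)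
        = V * Matrix.diagonal (fun i => d i * e i) * Vᴴ := by
    intro d e
    calc (V * Matrix.diagonal d * Vᴴ) * (V * Matrix.diagonal e * Vᴴ)
        = V * (Matrix.diagonal d * ((Vᴴ * V) * Matrix.diagonal e)) * Vᴴ := by
          simp only [Matrix.mul_assoc]
      _ = V * Matrix.diagonal (fun i => d i * e i) * Vᴴ := by
          rw [hV2, Matrix.one_mul, Matrix.diagonal_mul_diagonal]
  set wt : Fin (p+1) → ℝ := fun j => (V u j)^2 with hwt
  refine ⟨lam, wt, fun j => sq_nonneg _, ?_, ?_, ?_, ?_⟩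
  · have h1 : (V * Vᴴ) u u = 1 := by rw [hV1]; simp
    rw [Matrix.mul_apply] at h1
    simp only [Matrix.conjTranspose_apply, star_trivial] at h1
    simpa [hwt, sq] using h1
  · -- absMat entry
    set Cmat := V * Matrix.diagonal (fun j => |lam j|) * Vᴴ with hCmat
    have hC : Cmat.PosSemidef :=
      Matrix.PosSemidef.mul_mul_conjTranspose_same
        (Matrix.posSemidef_diagonal_iff.mpr (fun i => abs_nonneg _)) V
    have hsq : Cmat ^ 2 = A * Aᴴ := by
      rw [hA.eq, sq, hCmat, conj_mul]
      conv_rhs => rw [hspec, conj_mul]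
      have habs2 : (fun i => |lam i| * |lam i|) = fun i => lam i * lam i :=
        funext fun i => abs_mul_abs_self _
      rw [habs2]
    have habs : absMat A = Cmat := by
      have hP := Matrix.posSemidef_self_mul_conjTranspose A
      have hsqrt : absMat A = CFC.sqrt (A * Aᴴ) := by
        rw [CFC.sqrt_eq_cfc, cfc_nnreal_eq_real _ _ (Matrix.nonneg_iff_posSemidef.mpr hP),
          hP.1.cfc_eq]
        unfold absMat
        simp only [Matrix.IsHermitian.cfc, Unitary.conjStarAlgAut_apply]
        congr 3
        funext i
        simp [Real.coe_toNNReal']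
        exact congrArg Real.sqrt (max_eq_left (hP.eigenvalues_nonneg i)).symm
      rw [hsqrt]
      exact CFC.sqrt_unique (by rw [← sq, hsq]) (Matrix.nonneg_iff_posSemidef.mpr hC)
    rw [habs, hCmat, Matrix.mul_apply]
    apply Finset.sum_congr rfl
    intro j _
    rw [Matrix.mul_diagonal, Matrix.conjTranspose_apply]
    simp only [star_trivial, hwt, sq]
    ring
  · -- charpoly of A over ℂ
    intro z
    set φ := algebraMap ℝ ℂ with hφ
    set W := V.map φ with hW
    set W' := Vᴴ.map φ with hW'
    have hWW' : W * W' = 1 := by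
      rw [hW, hW', ← Matrix.map_mul, hV1, Matrix.map_one φ (map_zero φ) (map_one φ)]
    have hAc : A.map φ = W * Matrix.diagonal (fun k => (lam k : ℂ)) * W' := by
      rw [hspec, Matrix.map_mul, Matrix.map_mul, Matrix.diagonal_map (map_zero φ)]
      rfl
    rw [← Matrix.charpoly_map, eval_charpoly']
    have hfac : z • (1 : Matrix (Fin (p+1)) (Fin (p+1)) ℂ) - A.map φ
        = W * Matrix.diagonal (fun k => z - (lam k : ℂ)) * W' := by
      have hdiag : Matrix.diagonal (fun k : Fin (p+1) => z - (lam k : ℂ))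
          = z • (1 : Matrix (Fin (p+1)) (Fin (p+1)) ℂ)
            - Matrix.diagonal (fun k => (lam k : ℂ)) := by
        ext i j
        by_cases h : i = j
        · subst h; simp [Matrix.diagonal_apply, Matrix.one_apply]
        · simp [Matrix.diagonal_apply, Matrix.one_apply, h]
      rw [hdiag, Matrix.mul_sub, Matrix.sub_mul, ← hAc]
      congr 1
      rw [Matrix.mul_smul, Matrix.smul_mul, Matrix.mul_one, hWW']
    rw [hfac, Matrix.det_mul, Matrix.det_mul, mul_comm, ← mul_assoc, ← Matrix.det_mul,
      mul_eq_one_comm.mp hWW', Matrix.det_one, one_mul, Matrix.det_diagonal]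
  · -- charpoly of minor over ℂ
    intro z
    set φ := algebraMap ℝ ℂ with hφ
    set W := V.map φ with hW
    set W' := Vᴴ.map φ with hW'
    have hWW' : W * W' = 1 := by
      rw [hW, hW', ← Matrix.map_mul, hV1, Matrix.map_one φ (map_zero φ) (map_one φ)]
    have hW'W : W' * W = 1 := mul_eq_one_comm.mp hWW'
    have hAc : A.map φ = W * Matrix.diagonal (fun k => (lam k : ℂ)) * W' := by
      rw [hspec, Matrix.map_mul, Matrix.map_mul, Matrix.diagonal_map (map_zero φ)]
      rfl
    have hfac : z • (1 : Matrix (Fin (p+1)) (Fin (p+1)) ℂ) - A.map φ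
        = W * Matrix.diagonal (fun k => z - (lam k : ℂ)) * W' := by
      have hdiag : Matrix.diagonal (fun k : Fin (p+1) => z - (lam k : ℂ))
          = z • (1 : Matrix (Fin (p+1)) (Fin (p+1)) ℂ)
            - Matrix.diagonal (fun k => (lam k : ℂ)) := by
        ext i j
        by_cases h : i = j
        · subst h; simp [Matrix.diagonal_apply, Matrix.one_apply]
        · simp [Matrix.diagonal_apply, Matrix.one_apply, h]
      rw [hdiag, Matrix.mul_sub, Matrix.sub_mul, ← hAc]
      congr 1
      rw [Matrix.mul_smul, Matrix.smul_mul, Matrix.mul_one, hWW']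
    have hsub : ((A.submatrix u.succAbove u.succAbove).charpoly.map φ).eval z
        = ((z • (1 : Matrix (Fin (p+1)) (Fin (p+1)) ℂ) - A.map φ).submatrix
            u.succAbove u.succAbove).det := by
      rw [← Matrix.charpoly_map, ← Matrix.submatrix_map, eval_charpoly']
      congr 1
      have h1 : ((1 : Matrix (Fin (p+1)) (Fin (p+1)) ℂ)).submatrix u.succAbove u.succAbove
          = (1 : Matrix (Fin p) (Fin p) ℂ) :=
        Matrix.submatrix_one _ Fin.succAbove_right_injective
      rw [Matrix.submatrix_sub, Matrix.submatrix_smul]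
      simp only [Pi.sub_apply, Pi.smul_apply]
      rw [h1]
    rw [hsub, ← adjugate_diag_eq]
    -- adjugate of conjugated matrix
    have hadjW : W.adjugate = W.det • W' := by
      have := Matrix.mul_adjugate W
      calc W.adjugate = (W' * W) * W.adjugate := by rw [hW'W, Matrix.one_mul]
        _ = W' * (W.det • 1) := by rw [Matrix.mul_assoc, this]
        _ = W.det • W' := by rw [Matrix.mul_smul, Matrix.mul_one]
    have hadjW' : W'.adjugate = W'.det • W := by
      have := Matrix.mul_adjugate W'
      calc W'.adjugate = (W * W') * W'.adjugate := by rw [hWW', Matrix.one_mul]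
        _ = W * (W'.det • 1) := by rw [Matrix.mul_assoc, this]
        _ = W'.det • W := by rw [Matrix.mul_smul, Matrix.mul_one]
    have hdet1 : W'.det * W.det = 1 := by rw [← Matrix.det_mul, hW'W, Matrix.det_one]
    have hadj : (z • (1 : Matrix (Fin (p+1)) (Fin (p+1)) ℂ) - A.map φ).adjugate
        = W * Matrix.diagonal (fun i => ∏ k ∈ Finset.univ.erase i, (z - (lam k : ℂ))) * W' := by
      rw [hfac, Matrix.adjugate_mul_distrib, Matrix.adjugate_mul_distrib, hadjW, hadjW',
        Matrix.adjugate_diagonal]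
      simp only [Matrix.smul_mul, Matrix.mul_smul, smul_smul, Matrix.mul_assoc]
      rw [mul_comm W.det W'.det, hdet1, one_smul]
    rw [hadj, Matrix.mul_apply]
    apply Finset.sum_congr rfl
    intro j _
    rw [Matrix.mul_diagonal]
    have hW'ju : W' j u = (V u j : ℂ) := by
      simp [hW', Matrix.map_apply, Matrix.conjTranspose_apply, hφ, Complex.coe_algebraMap]
    have hWuj : W u j = (V u j : ℂ) := by simp [hW, Matrix.map_apply, hφ, Complex.coe_algebraMap]
    rw [hWuj, hW'ju, hwt]
    push_cast
    ring


lemma lam_key (lam : ℝ) (h : lam ≠ 0) :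
    (fun t : ℝ => lam^2/(lam^2+t^2)) = fun t => (1 + (lam⁻¹ * t)^2)⁻¹ := by
  funext t
  have hpos : (0:ℝ) < lam ^ 2 + t ^ 2 := by positivity
  field_simp

lemma integrable_lam (lam : ℝ) :
    MeasureTheory.Integrable (fun t : ℝ => lam^2/(lam^2+t^2)) := by
  rcases eq_or_ne lam 0 with h|h
  · simp [h]
  · rw [lam_key lam h]
    exact integrable_inv_one_add_sq.comp_mul_left' (inv_ne_zero h)

lemma integral_lam (lam : ℝ) :
    ∫ t : ℝ, lam^2/(lam^2+t^2) = Real.pi * |lam| := by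
  rcases eq_or_ne lam 0 with h|h
  · simp [h]
  · rw [lam_key lam h]
    rw [MeasureTheory.Measure.integral_comp_inv_mul_left (fun x : ℝ => (1+x^2)⁻¹) lam]
    rw [integral_univ_inv_one_add_sq, smul_eq_mul, mul_comm]

lemma energy_integrable {p : ℕ} (lam wt : Fin p → ℝ) :
    MeasureTheory.Integrable (fun t : ℝ => ∑ j, wt j * ((lam j)^2/((lam j)^2+t^2))) := by
  apply MeasureTheory.integrable_finset_sum
  intro j _
  exact (integrable_lam (lam j)).const_mul (wt j)

lemma energy_integral {p : ℕ} (lam wt : Fin p → ℝ) :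
    ∫ t : ℝ, (∑ j, wt j * ((lam j)^2/((lam j)^2+t^2))) = Real.pi * ∑ j, wt j * |lam j| := by
  rw [MeasureTheory.integral_finset_sum _ (fun j _ => (integrable_lam (lam j)).const_mul (wt j))]
  rw [Finset.mul_sum]
  apply Finset.sum_congr rfl
  intro j _
  rw [MeasureTheory.integral_const_mul, integral_lam]
  ring

lemma eval_sum_form (N : ℕ) (b : ℕ → ℝ) (t : ℝ) :
    ((∑ k ∈ Finset.range (N/2+1), C ((-1:ℝ)^k * b k) * X^(N-2*k)).map
        (algebraMap ℝ ℂ)).eval ((t:ℂ)*Complex.I)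
    = Complex.I^N * ((∑ k ∈ Finset.range (N/2+1), b k * t^(N-2*k) : ℝ) : ℂ) := by
  rw [Polynomial.map_sum, Polynomial.eval_finset_sum]
  push_cast
  rw [Finset.mul_sum]
  apply Finset.sum_congr rfl
  intro k hk
  have h2k : 2*k ≤ N := by
    have hk' : k ≤ N/2 := Nat.lt_succ_iff.mp (Finset.mem_range.mp hk)
    omega
  rw [Polynomial.map_mul, Polynomial.map_C, Polynomial.map_pow, Polynomial.map_X,
    eval_mul, eval_C, eval_pow, eval_X]
  rw [mul_pow]
  have hI2 : ((-1:ℂ))^k = Complex.I^(2*k) := by rw [pow_mul, Complex.I_sq]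
  have hIN : Complex.I^N = Complex.I^(2*k) * Complex.I^(N-2*k) := by
    rw [← pow_add]; congr 1; omega
  rw [hIN, ← hI2]
  push_cast [Complex.coe_algebraMap]
  ring


lemma factor_ne (t lam : ℝ) (ht : t ≠ 0) : (t:ℂ)*Complex.I - (lam:ℂ) ≠ 0 := by
  intro h
  have : ((t:ℂ)*Complex.I - (lam:ℂ)).im = 0 := by rw [h]; simp
  simp [Complex.sub_im, Complex.mul_im] at this
  exact ht this

lemma inv_factor_im (t lam : ℝ) :
    (((t:ℂ)*Complex.I - (lam:ℂ))⁻¹).im = -t/(lam^2+t^2) := by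
  rw [Complex.inv_im]
  congr 1
  · simp [Complex.sub_im, Complex.mul_im]
  · simp [Complex.normSq_apply, Complex.sub_re, Complex.sub_im, Complex.mul_re, Complex.mul_im]
    ring

-- core inequality
lemma core_ineq {N : ℕ} {p q : ℕ} (lam₁ wt₁ : Fin p → ℝ) (lam₂ wt₂ : Fin q → ℝ)
    (hw₁ : ∀ j, 0 ≤ wt₁ j) (hw₂ : ∀ j, 0 ≤ wt₂ j)
    (t β γ : ℝ) (ht : 0 < t) (hβ : 0 < β) (hγ0 : 0 ≤ γ) (hγβ : γ ≤ β)
    (e1 : (∏ k, ((t:ℂ)*Complex.I - lam₁ k))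
        * (∑ j, (wt₂ j:ℂ) * ∏ k ∈ Finset.univ.erase j, ((t:ℂ)*Complex.I - lam₂ k))
        = Complex.I^N * (β:ℂ))
    (e2 : (∏ k, ((t:ℂ)*Complex.I - lam₂ k))
        * (∑ j, (wt₁ j:ℂ) * ∏ k ∈ Finset.univ.erase j, ((t:ℂ)*Complex.I - lam₁ k))
        = Complex.I^N * (γ:ℂ)) :
    ∑ j, wt₁ j / ((lam₁ j)^2 + t^2) ≤ ∑ j, wt₂ j / ((lam₂ j)^2 + t^2) := by
  set P₁ : ℂ := ∏ k, ((t:ℂ)*Complex.I - lam₁ k) with hP₁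
  set P₂ : ℂ := ∏ k, ((t:ℂ)*Complex.I - lam₂ k) with hP₂
  have hP₁ne : P₁ ≠ 0 := Finset.prod_ne_zero_iff.mpr (fun k _ => factor_ne t (lam₁ k) ht.ne')
  have hP₂ne : P₂ ≠ 0 := Finset.prod_ne_zero_iff.mpr (fun k _ => factor_ne t (lam₂ k) ht.ne')
  set R₁ : ℂ := ∑ j, (wt₁ j:ℂ) * ((t:ℂ)*Complex.I - lam₁ j)⁻¹ with hR₁
  set R₂ : ℂ := ∑ j, (wt₂ j:ℂ) * ((t:ℂ)*Complex.I - lam₂ j)⁻¹ with hR₂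
  set D : ℂ := Complex.I^N / (P₁ * P₂) with hD
  have hR₂P : R₂ * P₂ = ∑ j, (wt₂ j:ℂ) * ∏ k ∈ Finset.univ.erase j, ((t:ℂ)*Complex.I - lam₂ k) := by
    rw [hR₂, Finset.sum_mul]
    apply Finset.sum_congr rfl
    intro j _
    rw [mul_assoc]
    congr 1
    rw [hP₂, ← Finset.mul_prod_erase _ _ (Finset.mem_univ j),
      inv_mul_cancel_left₀ (factor_ne t (lam₂ j) ht.ne')]
  have hR₁P : R₁ * P₁ = ∑ j, (wt₁ j:ℂ) * ∏ k ∈ Finset.univ.erase j, ((t:ℂ)*Complex.I - lam₁ k) := by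
    rw [hR₁, Finset.sum_mul]
    apply Finset.sum_congr rfl
    intro j _
    rw [mul_assoc]
    congr 1
    rw [hP₁, ← Finset.mul_prod_erase _ _ (Finset.mem_univ j),
      inv_mul_cancel_left₀ (factor_ne t (lam₁ j) ht.ne')]
  have hR₂D : R₂ = (β:ℂ) * D := by
    rw [hD, mul_div_assoc']
    rw [eq_div_iff (mul_ne_zero hP₁ne hP₂ne)]
    calc R₂ * (P₁ * P₂) = P₁ * (R₂ * P₂) := by ring
      _ = (β:ℂ) * Complex.I^N := by rw [hR₂P, e1]; ring
  have hR₁D : R₁ = (γ:ℂ) * D := by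
    rw [hD, mul_div_assoc']
    rw [eq_div_iff (mul_ne_zero hP₁ne hP₂ne)]
    calc R₁ * (P₁ * P₂) = P₂ * (R₁ * P₁) := by ring
      _ = (γ:ℂ) * Complex.I^N := by rw [hR₁P, e2]; ring
  -- imaginary parts
  set r₁ : ℝ := ∑ j, wt₁ j / ((lam₁ j)^2 + t^2) with hr₁
  set r₂ : ℝ := ∑ j, wt₂ j / ((lam₂ j)^2 + t^2) with hr₂
  have hR₁im : R₁.im = -t * r₁ := by
    rw [hR₁, Complex.im_sum, hr₁, Finset.mul_sum]
    apply Finset.sum_congr rfl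
    intro j _
    rw [Complex.mul_im, Complex.ofReal_re, Complex.ofReal_im, inv_factor_im]
    ring
  have hR₂im : R₂.im = -t * r₂ := by
    rw [hR₂, Complex.im_sum, hr₂, Finset.mul_sum]
    apply Finset.sum_congr rfl
    intro j _
    rw [Complex.mul_im, Complex.ofReal_re, Complex.ofReal_im, inv_factor_im]
    ring
  have him1 : -t * r₁ = γ * D.im := by
    rw [← hR₁im, hR₁D, Complex.mul_im, Complex.ofReal_re, Complex.ofReal_im]
    ring
  have him2 : -t * r₂ = β * D.im := by
    rw [← hR₂im, hR₂D, Complex.mul_im, Complex.ofReal_re, Complex.ofReal_im]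
    ring
  have hr₂0 : 0 ≤ r₂ := Finset.sum_nonneg fun j _ => div_nonneg (hw₂ j) (by positivity)
  have hkey : β * r₁ = γ * r₂ := by
    have h3 : β * (t * r₁) = γ * (t * r₂) := by nlinarith [him1, him2]
    have := mul_left_cancel₀ ht.ne' (by linarith [h3] : t * (β * r₁) = t * (γ * r₂))
    exact this
  have : β * r₁ ≤ β * r₂ := by
    rw [hkey]
    exact mul_le_mul_of_nonneg_right hγβ hr₂0
  exact le_of_mul_le_mul_left this hβ

lemma lead_coeff_eq_one {N : ℕ} (hN : 0 < N) (b : ℕ → ℝ) (P : Polynomial ℝ)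
    (hmon : P.Monic) (hdeg : P.natDegree = N)
    (h : P = ∑ k ∈ Finset.range (N/2+1), C ((-1:ℝ)^k * b k) * X^(N-2*k)) : b 0 = 1 := by
  have hc := congrArg (fun q : Polynomial ℝ => q.coeff N) h
  rw [Polynomial.finset_sum_coeff] at hc
  have hL : P.coeff N = 1 := by rw [← hdeg]; exact hmon.coeff_natDegree
  rw [hL, Finset.sum_eq_single 0] at hc
  · simpa using hc.symm
  · intro k hkmem hk0
    have hk' : k ≤ N/2 := Nat.lt_succ_iff.mp (Finset.mem_range.mp hkmem)
    rw [Polynomial.coeff_C_mul, Polynomial.coeff_X_pow, if_neg (by omega), mul_zero]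
  · intro h0
    exact absurd (Finset.mem_range.mpr (Nat.succ_pos _)) h0

/-- comparing vertices of two disjoint bipartite graphs.
φ(G₁ ∪ (G₂ - w); x) = φ(G₁;x)·φ(G₂-w;x) and φ(G₂ ∪ (G₁ - v); x) = φ(G₂;x)·φ(G₁-v;x);
if each even coefficient b_{2k} of the first dominates the corresponding c_{2k} of
the second, then E_{G₂}(w) ≤ E_{G₁}(v). -/
theorem vertex_energy_quasiOrder_two_graphs {n m : ℕ}
    (G₁ : SimpleGraph (Fin (n + 1))) (G₂ : SimpleGraph (Fin (m + 1)))
    (hG₁ : G₁.Colorable 2) (hG₂ : G₂.Colorable 2)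
    (v : Fin (n + 1)) (w : Fin (m + 1)) (b c : ℕ → ℝ)
    (hb : ∀ k, 0 ≤ b k) (hc : ∀ k, 0 ≤ c k)
    (h1 : (adjMat G₁).charpoly
          * ((adjMat G₂).submatrix w.succAbove w.succAbove).charpoly
        = ∑ k ∈ Finset.range ((n + 1 + m) / 2 + 1),
            Polynomial.C ((-1 : ℝ) ^ k * b k) * Polynomial.X ^ (n + 1 + m - 2 * k))
    (h2 : (adjMat G₂).charpoly
          * ((adjMat G₁).submatrix v.succAbove v.succAbove).charpoly
        = ∑ k ∈ Finset.range ((n + 1 + m) / 2 + 1),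
            Polynomial.C ((-1 : ℝ) ^ k * c k) * Polynomial.X ^ (n + 1 + m - 2 * k))
    (hbc : ∀ k, c k ≤ b k) :
    vertexEnergy G₂ w ≤ vertexEnergy G₁ v := by
  classical
  set N : ℕ := n + 1 + m with hN
  have hA₁ : (adjMat G₁).IsHermitian := by
    letI := Classical.decRel G₁.Adj
    ext i j
    simp [adjMat, Matrix.conjTranspose_apply, SimpleGraph.adjMatrix_apply, G₁.adj_comm]
  have hA₂ : (adjMat G₂).IsHermitian := by
    letI := Classical.decRel G₂.Adj
    ext i j
    simp [adjMat, Matrix.conjTranspose_apply, SimpleGraph.adjMatrix_apply, G₂.adj_comm]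
  obtain ⟨lam₁, wt₁, hw₁, hs₁, hE₁, hchar₁, hminor₁⟩ := spectral_data (adjMat G₁) hA₁ v
  obtain ⟨lam₂, wt₂, hw₂, hs₂, hE₂, hchar₂, hminor₂⟩ := spectral_data (adjMat G₂) hA₂ w
  -- leading coefficients
  have hdeg1 : ((adjMat G₁).charpoly
      * ((adjMat G₂).submatrix w.succAbove w.succAbove).charpoly).natDegree = N := by
    rw [Polynomial.Monic.natDegree_mul (Matrix.charpoly_monic _) (Matrix.charpoly_monic _),
      Matrix.charpoly_natDegree_eq_dim, Matrix.charpoly_natDegree_eq_dim,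
      Fintype.card_fin, Fintype.card_fin]
  have hdeg2 : ((adjMat G₂).charpoly
      * ((adjMat G₁).submatrix v.succAbove v.succAbove).charpoly).natDegree = N := by
    rw [Polynomial.Monic.natDegree_mul (Matrix.charpoly_monic _) (Matrix.charpoly_monic _),
      Matrix.charpoly_natDegree_eq_dim, Matrix.charpoly_natDegree_eq_dim,
      Fintype.card_fin, Fintype.card_fin]
    omega
  have hb0 : b 0 = 1 := lead_coeff_eq_one (by omega) b _
    ((Matrix.charpoly_monic _).mul (Matrix.charpoly_monic _)) hdeg1 h1
  have hc0 : c 0 = 1 := lead_coeff_eq_one (by omega) c _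
    ((Matrix.charpoly_monic _).mul (Matrix.charpoly_monic _)) hdeg2 h2
  -- evaluation identities
  have e1 : ∀ t : ℝ, (∏ k, ((t:ℂ)*Complex.I - lam₁ k))
      * (∑ j, (wt₂ j:ℂ) * ∏ k ∈ Finset.univ.erase j, ((t:ℂ)*Complex.I - lam₂ k))
      = Complex.I^N * ((∑ k ∈ Finset.range (N/2+1), b k * t^(N-2*k) : ℝ) : ℂ) := by
    intro t
    have hcong := congrArg
      (fun q : Polynomial ℝ => ((q.map (algebraMap ℝ ℂ)).eval ((t:ℂ)*Complex.I))) h1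
    rw [Polynomial.map_mul, Polynomial.eval_mul, hchar₁, hminor₂, eval_sum_form] at hcong
    exact hcong
  have e2 : ∀ t : ℝ, (∏ k, ((t:ℂ)*Complex.I - lam₂ k))
      * (∑ j, (wt₁ j:ℂ) * ∏ k ∈ Finset.univ.erase j, ((t:ℂ)*Complex.I - lam₁ k))
      = Complex.I^N * ((∑ k ∈ Finset.range (N/2+1), c k * t^(N-2*k) : ℝ) : ℂ) := by
    intro t
    have hcong := congrArg
      (fun q : Polynomial ℝ => ((q.map (algebraMap ℝ ℂ)).eval ((t:ℂ)*Complex.I))) h2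
    rw [Polynomial.map_mul, Polynomial.eval_mul, hchar₂, hminor₁, eval_sum_form] at hcong
    exact hcong
  -- resolvent comparison for positive t
  have hr : ∀ t : ℝ, 0 < t →
      ∑ j, wt₁ j / ((lam₁ j)^2 + t^2) ≤ ∑ j, wt₂ j / ((lam₂ j)^2 + t^2) := by
    intro t ht
    refine core_ineq lam₁ wt₁ lam₂ wt₂ hw₁ hw₂ t _ _ ht ?_ ?_ ?_ (e1 t) (e2 t)
    · refine Finset.sum_pos' (fun k _ => mul_nonneg (hb k) (by positivity)) ⟨0, ?_, ?_⟩
      · exact Finset.mem_range.mpr (Nat.succ_pos _)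
      · rw [hb0]; positivity
    · exact Finset.sum_nonneg fun k _ => mul_nonneg (hc k) (by positivity)
    · exact Finset.sum_le_sum fun k _ =>
        mul_le_mul_of_nonneg_right (hbc k) (pow_nonneg ht.le _)
  -- pointwise integrand comparison for t ≠ 0
  have hg : ∀ t : ℝ, t ≠ 0 →
      ∑ j, wt₂ j * ((lam₂ j)^2/((lam₂ j)^2+t^2))
        ≤ ∑ j, wt₁ j * ((lam₁ j)^2/((lam₁ j)^2+t^2)) := by
    intro t ht
    have habs : 0 < |t| := abs_pos.mpr ht
    have h := hr |t| habs
    have key : ∀ (q : ℕ) (lam wtf : Fin q → ℝ),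
        (∑ j, wtf j * ((lam j)^2/((lam j)^2+t^2)))
          = (∑ j, wtf j) - t^2 * (∑ j, wtf j/((lam j)^2+|t|^2)) := by
      intro q lam wtf
      rw [Finset.mul_sum, ← Finset.sum_sub_distrib]
      apply Finset.sum_congr rfl
      intro j _
      have hpos : (0:ℝ) < (lam j)^2 + t^2 := by positivity
      rw [sq_abs]
      field_simp
      ring
    rw [key _ lam₁ wt₁, key _ lam₂ wt₂, hs₁, hs₂]
    nlinarith [mul_le_mul_of_nonneg_left h (sq_nonneg t)]
  -- integrate
  have hae : ∀ᵐ t : ℝ, t ≠ 0 := by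
    rw [MeasureTheory.ae_iff]
    have h0 : {t : ℝ | ¬ t ≠ 0} = {0} := by ext t; simp
    rw [h0]
    exact Real.volume_singleton
  have hle : (∫ t : ℝ, ∑ j, wt₂ j * ((lam₂ j)^2/((lam₂ j)^2+t^2)))
      ≤ ∫ t : ℝ, ∑ j, wt₁ j * ((lam₁ j)^2/((lam₁ j)^2+t^2)) := by
    refine MeasureTheory.integral_mono_ae (energy_integrable lam₂ wt₂)
      (energy_integrable lam₁ wt₁) ?_
    filter_upwards [hae] with t ht using hg t ht
  rw [energy_integral lam₂ wt₂, energy_integral lam₁ wt₁] at hle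
  have hfin := le_of_mul_le_mul_left
    (by calc Real.pi * ∑ j, wt₂ j * |lam₂ j| ≤ Real.pi * ∑ j, wt₁ j * |lam₁ j| := hle)
    Real.pi_pos
  show absMat (adjMat G₂) w w ≤ absMat (adjMat G₁) v v
  rw [hE₁, hE₂]
  exact hfin
end

section
/- Let G be a finite bipartite graph with parts V_1 and V_2. Then Σ_{v ∈ V_1} E_G(v) = Σ_{v ∈ V_2} E_G(v) = (1/2) E(G). -/
open Matrix BigOperators Finset Polynomial

/-- The energy of a graph: the trace of |A| (equivalently the sum of vertex energies). -/
noncomputable def graphEnergy {V : Type*} [Fintype V] [DecidableEq V]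
    (G : SimpleGraph V) : ℝ :=
  Matrix.trace (absMat (adjMat G))

/-- Conjugation by a unitary is multiplicative on the conjugated matrices. -/
lemma conj_mul_conj {V : Type*} [Fintype V] [DecidableEq V]
    {U : Matrix V V ℝ} (hU : U * star U = 1) (d e : V → ℝ) :
    (U * Matrix.diagonal d * star U) * (U * Matrix.diagonal e * star U)
      = U * Matrix.diagonal (fun i => d i * e i) * star U := by
  have hU2 : star U * U = 1 := mul_eq_one_comm.mp hU
  have hU' : ∀ X : Matrix V V ℝ, U * (star U * X) = X := fun X => by
    rw [← mul_assoc, hU, one_mul]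
  have hU'' : ∀ X : Matrix V V ℝ, star U * (U * X) = X := fun X => by
    rw [← mul_assoc, hU2, one_mul]
  simp only [mul_assoc, hU', hU'']
  rw [← mul_assoc (Matrix.diagonal d), Matrix.diagonal_mul_diagonal]

/-- Spectral form of the absolute value of a hermitian real matrix. -/
lemma absMat_spectral {V : Type*} [Fintype V] [DecidableEq V]
    {A : Matrix V V ℝ} (hA : A.IsHermitian) :
    absMat A = (hA.eigenvectorUnitary : Matrix V V ℝ)
      * Matrix.diagonal (fun i => |hA.eigenvalues i|)
      * star (hA.eigenvectorUnitary : Matrix V V ℝ) := by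
  set U : Matrix V V ℝ := (hA.eigenvectorUnitary : Matrix V V ℝ) with hUdef
  have hU : U * star U = 1 :=
    (Matrix.mem_unitaryGroup_iff).mp hA.eigenvectorUnitary.2
  set S : Matrix V V ℝ := U * Matrix.diagonal (fun i => |hA.eigenvalues i|) * star U with hS
  have hSpsd : S.PosSemidef := by
    refine Matrix.PosSemidef.mul_mul_conjTranspose_same ?_ U
    exact Matrix.posSemidef_diagonal_iff.mpr fun i => abs_nonneg _
  have hspec : A = U * Matrix.diagonal (RCLike.ofReal ∘ hA.eigenvalues) * star U :=
    hA.spectral_theorem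
  have hAA : A * Aᴴ = U * Matrix.diagonal
      (fun i => (RCLike.ofReal ∘ hA.eigenvalues) i * (RCLike.ofReal ∘ hA.eigenvalues) i)
      * star U := by
    rw [hA.eq]
    conv_lhs => rw [hspec]
    exact conj_mul_conj hU _ _
  have hsq : S ^ 2 = A * Aᴴ := by
    rw [pow_two, hS, conj_mul_conj hU, hAA]
    congr 1
    congr 1
    ext i
    simp [RCLike.ofReal_real_eq_id, abs_mul_abs_self]
  have hsa : IsSelfAdjoint A := hA
  have hB : (A * Aᴴ).IsHermitian := (Matrix.posSemidef_self_mul_conjTranspose A).1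
  have e1 : absMat A = cfc Real.sqrt (A * Aᴴ) := by
    rw [hB.cfc_eq, Matrix.IsHermitian.cfc, Unitary.conjStarAlgAut_apply]; rfl
  have e2 : A * Aᴴ = cfc (fun x : ℝ => x * x) A := by
    rw [cfc_mul (fun x : ℝ => x) (fun x : ℝ => x) A, cfc_id' ℝ A, hA.eq]
  rw [e1, e2, ← cfc_comp' Real.sqrt (fun x : ℝ => x * x) A]
  rw [show (fun x : ℝ => Real.sqrt (x * x)) = fun x => |x| from
    funext fun x => Real.sqrt_mul_self_eq_abs x]
  rw [hA.cfc_eq, Matrix.IsHermitian.cfc, Unitary.conjStarAlgAut_apply]; rfl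

/-- if G is bipartite with parts V₁ and V₂, then the sum of the vertex
energies over each part equals half the total energy. -/
theorem bipartite_parts_half_energy {V : Type*} [Fintype V] [DecidableEq V]
    (G : SimpleGraph V) (V₁ V₂ : Finset V)
    (hunion : V₁ ∪ V₂ = Finset.univ) (hdisj : Disjoint V₁ V₂)
    (hedge : ∀ a b : V, G.Adj a b → (a ∈ V₁ ∧ b ∈ V₂) ∨ (a ∈ V₂ ∧ b ∈ V₁)) :
    (∑ v ∈ V₁, vertexEnergy G v = (1 / 2) * graphEnergy G) ∧
    (∑ v ∈ V₂, vertexEnergy G v = (1 / 2) * graphEnergy G) := by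
  classical
  set A : Matrix V V ℝ := adjMat G with hAdef
  have hA : A.IsHermitian := by
    rw [Matrix.IsHermitian, Matrix.conjTranspose_eq_transpose_of_trivial]
    exact SimpleGraph.transpose_adjMatrix G
  set U : Matrix V V ℝ := (hA.eigenvectorUnitary : Matrix V V ℝ) with hUdef
  have hU : U * star U = 1 :=
    (Matrix.mem_unitaryGroup_iff).mp hA.eigenvectorUnitary.2
  have hU2 : star U * U = 1 :=
    (Matrix.mem_unitaryGroup_iff').mp hA.eigenvectorUnitary.2
  have hUl : ∀ X : Matrix V V ℝ, U * (star U * X) = X := fun X => by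
    rw [← Matrix.mul_assoc, hU, Matrix.one_mul]
  have hUl' : ∀ X : Matrix V V ℝ, star U * (U * X) = X := fun X => by
    rw [← Matrix.mul_assoc, hU2, Matrix.one_mul]
  set lam : V → ℝ := hA.eigenvalues with hlam
  set M : Matrix V V ℝ := absMat A with hM
  have hMspec : M = U * Matrix.diagonal (fun i => |lam i|) * star U := absMat_spectral hA
  -- the signature function
  set d : V → ℝ := fun v => if v ∈ V₁ then 1 else -1 with hd
  have hdV₂ : ∀ v ∈ V₂, d v = -1 := by
    intro v hv
    have : v ∉ V₁ := fun h => (Finset.disjoint_left.mp hdisj h) hv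
    simp [hd, this]
  -- anticommutation
  have hanti : Matrix.diagonal d * A = -(A * Matrix.diagonal d) := by
    ext a b
    rw [Matrix.diagonal_mul]
    rw [Matrix.neg_apply, Matrix.mul_diagonal]
    by_cases hadj : G.Adj a b
    · have hab : A a b = 1 := by
        simp [hAdef, adjMat, SimpleGraph.adjMatrix_apply, hadj]
      rcases hedge a b hadj with ⟨h1, h2⟩ | ⟨h1, h2⟩
      · rw [hab, hdV₂ b h2]
        simp [hd, h1]
      · have : a ∉ V₁ := fun h => (Finset.disjoint_left.mp hdisj h) h1
        rw [hab]
        simp [hd, this, h2]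
    · have hab : A a b = 0 := by
        simp [hAdef, adjMat, SimpleGraph.adjMatrix_apply, hadj]
      rw [hab]; ring
  -- conjugated signature matrix
  set P : Matrix V V ℝ := star U * Matrix.diagonal d * U with hP
  have hdiagA : star U * A * U = Matrix.diagonal (RCLike.ofReal ∘ lam) :=
    by
      have hspec : A = U * Matrix.diagonal (RCLike.ofReal ∘ lam) * star U := hA.spectral_theorem
      conv_lhs => rw [hspec]
      simp only [Matrix.mul_assoc, hUl']
      rw [hU2, Matrix.mul_one]
  have hPD : P * Matrix.diagonal (RCLike.ofReal ∘ lam)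
      = -(Matrix.diagonal (RCLike.ofReal ∘ lam) * P) := by
    rw [← hdiagA, hP]
    have : star U * Matrix.diagonal d * U * (star U * A * U)
        = star U * (Matrix.diagonal d * A) * U := by
      simp only [Matrix.mul_assoc, hUl]
    rw [this, hanti]
    simp only [Matrix.mul_neg, Matrix.neg_mul]
    congr 1
    simp only [Matrix.mul_assoc, hUl]
  have hkey : ∀ i, P i i * |lam i| = 0 := by
    intro i
    have h1 := congrFun (congrFun hPD i) i
    rw [Matrix.mul_diagonal, Matrix.neg_apply, Matrix.diagonal_mul] at h1
    have hofr : (RCLike.ofReal ∘ lam) i = lam i := by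
      simp [RCLike.ofReal_real_eq_id]
    rw [hofr] at h1
    have h2 : P i i * lam i = 0 := by linarith
    rcases mul_eq_zero.mp h2 with h | h
    · rw [h, zero_mul]
    · rw [h, abs_zero, mul_zero]
  -- the trace of (diagonal d) * M is zero
  have htr0 : ∑ v, d v * M v v = 0 := by
    have e1 : ∑ v, d v * M v v = Matrix.trace (Matrix.diagonal d * M) := by
      rw [Matrix.trace]
      apply Finset.sum_congr rfl
      intro v _
      rw [Matrix.diag_apply, Matrix.diagonal_mul]
    have e3 : Matrix.trace (Matrix.diagonal d * M)
        = Matrix.trace (P * Matrix.diagonal (fun i => |lam i|)) := by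
      calc Matrix.trace (Matrix.diagonal d * M)
          = Matrix.trace ((Matrix.diagonal d * U * Matrix.diagonal (fun i => |lam i|))
              * star U) := by rw [hMspec]; simp only [mul_assoc]
        _ = Matrix.trace (star U
              * (Matrix.diagonal d * U * Matrix.diagonal (fun i => |lam i|))) :=
            Matrix.trace_mul_comm _ _
        _ = Matrix.trace (P * Matrix.diagonal (fun i => |lam i|)) := by
            rw [hP]; simp only [mul_assoc]
    rw [e1, e3, Matrix.trace]
    apply Finset.sum_eq_zero
    intro i _
    rw [Matrix.diag_apply, Matrix.mul_diagonal]
    exact hkey i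
  -- split the sum over the partition
  have hsplit : ∀ f : V → ℝ, ∑ v, f v = ∑ v ∈ V₁, f v + ∑ v ∈ V₂, f v := by
    intro f
    rw [← Finset.sum_union hdisj, hunion]
  have hzero : ∑ v ∈ V₁, M v v - ∑ v ∈ V₂, M v v = 0 := by
    have := htr0
    rw [hsplit (fun v => d v * M v v)] at this
    have hA1 : ∑ v ∈ V₁, d v * M v v = ∑ v ∈ V₁, M v v := by
      apply Finset.sum_congr rfl
      intro v hv; simp [hd, hv]
    have hA2 : ∑ v ∈ V₂, d v * M v v = -∑ v ∈ V₂, M v v := by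
      rw [← Finset.sum_neg_distrib]
      apply Finset.sum_congr rfl
      intro v hv; rw [hdV₂ v hv]; ring
    rw [hA1, hA2] at this
    linarith
  have htot : ∑ v ∈ V₁, M v v + ∑ v ∈ V₂, M v v = graphEnergy G := by
    rw [graphEnergy, Matrix.trace, ← hsplit (fun v => M v v)]
    rfl
  have hv1 : ∀ W : Finset V, ∑ v ∈ W, vertexEnergy G v = ∑ v ∈ W, M v v := by
    intro W; rfl
  constructor
  · rw [hv1]; linarith
  · rw [hv1]; linarith
end
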